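/- Let G be a finite group and let x, y ∈ G be elements whose orders are powers of the same prime p, with o(x) ≤ o(y). Then N[x] ⊇ N[y] in the power graph of G if and only if x is a power of y. -/
import Mathlib

/-- The power graph of a group: distinct `x, y` are adjacent iff one is a
positive power of the other. -/
def powerGraph (G : Type*) [Group G] : SimpleGraph G :=
  SimpleGraph.fromRel (fun x y => ∃ m : ℕ, 0 < m ∧ x = y ^ m)

/-- The closed neighbourhood of a vertex in the power graph. -/
def closedNbhd {G : Type*} [Group G] (x : G) : Set G :=
  insert x ((powerGraph G).neighborSet x)

private lemma posPow_of_zpowers {G : Type*} [Group G] [Finite G] {z w : G}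
    (h : w ∈ Subgroup.zpowers z) : ∃ m : ℕ, 0 < m ∧ w = z ^ m := by
  rw [← mem_powers_iff_mem_zpowers, Submonoid.mem_powers_iff] at h
  obtain ⟨s, hs⟩ := h
  rcases Nat.eq_zero_or_pos s with rfl | hpos
  · exact ⟨orderOf z, orderOf_pos z, by simp [← hs, pow_orderOf_eq_one]⟩
  · exact ⟨s, hpos, hs.symm⟩

private lemma pow_mem_zpowers_pow {G : Type*} [Group G] (y : G) (k m : ℕ)
    (h : Nat.gcd k (orderOf y) ∣ m) : y ^ m ∈ Subgroup.zpowers (y ^ k) := by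
  obtain ⟨c, hc⟩ := h
  set n := orderOf y
  refine ⟨Nat.gcdA k n * c, ?_⟩
  show ((y ^ k) ^ (Nat.gcdA k n * (c:ℤ)) : G) = y ^ m
  have : ((y ^ k) ^ (Nat.gcdA k n * (c:ℤ)) : G) = y ^ ((k : ℤ) * (Nat.gcdA k n * c)) := by
    rw [← zpow_natCast y k, ← zpow_mul]
  rw [this, show (y ^ m : G) = y ^ (m : ℤ) by rw [zpow_natCast],
    zpow_eq_zpow_iff_modEq]
  have hb := Nat.gcd_eq_gcd_ab k n
  have : (k : ℤ) * (Nat.gcdA k n * c) - m = -(n * (Nat.gcdB k n * c)) := by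
    have hm : (m : ℤ) = (Nat.gcd k n : ℤ) * c := by exact_mod_cast hc
    rw [hm, hb]; ring
  exact Int.ModEq.symm (Int.modEq_iff_dvd.mpr (by rw [this]; exact ⟨-(Nat.gcdB k n * c), by ring⟩))

private lemma zpowers_comparable {G : Type*} [Group G] {p : ℕ} (hp : p.Prime) {y : G}
    {b : ℕ} (hy : orderOf y = p ^ b) (k m : ℕ) :
    y ^ m ∈ Subgroup.zpowers (y ^ k) ∨ y ^ k ∈ Subgroup.zpowers (y ^ m) := by
  set n := orderOf y
  have h1 : Nat.gcd k n ∣ p ^ b := hy ▸ Nat.gcd_dvd_right k n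
  have h2 : Nat.gcd m n ∣ p ^ b := hy ▸ Nat.gcd_dvd_right m n
  obtain ⟨i, hi, hgi⟩ := (Nat.dvd_prime_pow hp).mp h1
  obtain ⟨j, hj, hgj⟩ := (Nat.dvd_prime_pow hp).mp h2
  rcases le_total i j with hij | hij
  · -- gcd k n ∣ gcd m n ∣ m
    exact Or.inl (pow_mem_zpowers_pow y k m
      ((hgi ▸ hgj ▸ pow_dvd_pow p hij).trans (Nat.gcd_dvd_left m n)))
  · exact Or.inr (pow_mem_zpowers_pow y m k
      ((hgj ▸ hgi ▸ pow_dvd_pow p hij).trans (Nat.gcd_dvd_left k n)))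

private lemma mem_closedNbhd_of_zpowers {G : Type*} [Group G] [Finite G] {z w : G}
    (h : z ∈ Subgroup.zpowers w ∨ w ∈ Subgroup.zpowers z) : z ∈ closedNbhd w := by
  by_cases hzw : z = w
  · exact Set.mem_insert_iff.mpr (Or.inl hzw)
  · refine Set.mem_insert_iff.mpr (Or.inr ?_)
    show (powerGraph G).Adj w z
    rw [powerGraph, SimpleGraph.fromRel_adj]
    refine ⟨fun h' => hzw h'.symm, ?_⟩
    rcases h with h | h
    · obtain ⟨s, hs, rfl⟩ := posPow_of_zpowers h
      exact Or.inr ⟨s, hs, rfl⟩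
    · obtain ⟨s, hs, rfl⟩ := posPow_of_zpowers h
      exact Or.inl ⟨s, hs, rfl⟩

theorem closedNbhd_superset_iff_power {G : Type*} [Group G] [Finite G]
    (p : ℕ) (hp : p.Prime) (x y : G)
    (hx : ∃ a : ℕ, orderOf x = p ^ a) (hy : ∃ b : ℕ, orderOf y = p ^ b)
    (hle : orderOf x ≤ orderOf y) :
    closedNbhd y ⊆ closedNbhd x ↔ ∃ m : ℕ, 0 < m ∧ x = y ^ m := by
  obtain ⟨b, hb⟩ := hy
  constructor
  · intro hsub
    have hyx : y ∈ closedNbhd x := hsub (Set.mem_insert y _)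
    rcases Set.mem_insert_iff.mp hyx with h | h
    · exact ⟨1, one_pos, by rw [pow_one, h]⟩
    · rw [SimpleGraph.mem_neighborSet, powerGraph, SimpleGraph.fromRel_adj] at h
      rcases h.2 with h' | h'
      · exact h'
      · -- y = x ^ m, so orderOf y ∣ orderOf x, hence equal orders
        obtain ⟨m, hm, rfl⟩ := h'
        have hdvd : orderOf (x ^ m) ∣ orderOf x := orderOf_pow_dvd m
        have heq : orderOf (x ^ m) = orderOf x :=
          le_antisymm (Nat.le_of_dvd (orderOf_pos x) hdvd) hle
        -- gcd (orderOf x) m = 1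
        have hg : Nat.gcd (orderOf x) m = 1 := by
          have h1 : orderOf x / Nat.gcd (orderOf x) m = orderOf x := by
            rw [← orderOf_pow (n := m) x, heq]
          rcases (Nat.div_eq_self).mp h1 with h0 | h0
          · exact absurd h0 (orderOf_pos x).ne'
          · exact h0
        have : x ^ 1 ∈ Subgroup.zpowers (x ^ m) :=
          pow_mem_zpowers_pow x m 1 (by rw [Nat.gcd_comm, hg])
        rw [pow_one] at this
        exact posPow_of_zpowers this
  · rintro ⟨m, hm, rfl⟩
    intro z hz
    have hz' : z ∈ Subgroup.zpowers y ∨ y ∈ Subgroup.zpowers z := by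
      rcases Set.mem_insert_iff.mp hz with rfl | h
      · exact Or.inl (Subgroup.mem_zpowers z)
      · rw [SimpleGraph.mem_neighborSet, powerGraph, SimpleGraph.fromRel_adj] at h
        rcases h.2 with ⟨k, _, hk⟩ | ⟨k, _, hk⟩
        · exact Or.inr ⟨(k : ℤ), by show z ^ (k:ℤ) = y; rw [zpow_natCast]; exact hk.symm⟩
        · exact Or.inl ⟨(k : ℤ), by show y ^ (k:ℤ) = z; rw [zpow_natCast]; exact hk.symm⟩
    rcases hz' with h | h
    · obtain ⟨k, _, rfl⟩ := posPow_of_zpowers h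
      exact mem_closedNbhd_of_zpowers (zpowers_comparable hp hb k m).symm
    · -- y ∈ zpowers z, so y ^ m ∈ zpowers z
      have : y ^ m ∈ Subgroup.zpowers z := Subgroup.pow_mem _ h m
      exact mem_closedNbhd_of_zpowers (Or.inr this)
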